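/- Let G ≤ Sym(Ω) be a permutation group with subgroups H, K ≤ G, let δ ∈ Ω, and let M_K ⊆ F_H ⊆ Ω \ {δ} and M_H ⊆ F_K ⊆ Ω \ {δ} be nonempty sets satisfying: (i) H fixes every point of F_H; (ii) K fixes every point of F_K; (iii) H leaves both M_H ∪ {δ} and F_K ∪ {δ} invariant and acts transitively on M_H ∪ {δ}; (iv) K leaves both M_K ∪ {δ} and F_H ∪ {δ} invariant and acts transitively on M_K ∪ {δ}. Then there exists a subgroup L ≤ G such that every element of L fixes each point of (F_H ∪ F_K ∪ {δ}) \ (M_H ∪ M_K ∪ {δ}), L leaves M_H ∪ M_K ∪ {δ} invariant, and the permutation group induced by L on M_H ∪ M_K ∪ {δ} is the full alternating group on that set. -/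

import Mathlib

attribute [local instance] Classical.propDecidable

open Equiv Equiv.Perm

theorem Equiv.Perm.apply_inv_self {α : Type*} (f : Equiv.Perm α) (x : α) : f (f⁻¹ x) = x :=
  f.apply_symm_apply x

section Aux

variable {γ : Type*} [DecidableEq γ]

/-- the 3-cycle a → b → c → a -/
private def Ccyc (a b c : γ) : Equiv.Perm γ := Equiv.swap a b * Equiv.swap b c

private lemma Ccyc_apply (a b c : γ) (hab : a ≠ b) (hac : a ≠ c) (hbc : b ≠ c) (x : γ) :
    Ccyc a b c x = if x = a then b else if x = b then c else if x = c then a else x := by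
  simp only [Ccyc, Equiv.Perm.mul_apply]
  by_cases hxa : x = a
  · subst hxa; rw [if_pos rfl, swap_apply_of_ne_of_ne hab hac, swap_apply_left]
  by_cases hxb : x = b
  · subst hxb
    rw [if_neg hxa, if_pos rfl, swap_apply_left,
      swap_apply_of_ne_of_ne (Ne.symm hac) (Ne.symm hbc)]
  by_cases hxc : x = c
  · subst hxc; rw [if_neg hxa, if_neg hxb, if_pos rfl, swap_apply_right, swap_apply_right]
  · rw [if_neg hxa, if_neg hxb, if_neg hxc, swap_apply_of_ne_of_ne hxb hxc,
      swap_apply_of_ne_of_ne hxa hxb]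

private lemma Ccyc_inv {a b c : γ} (hab : a ≠ b) (hac : a ≠ c) (hbc : b ≠ c) :
    (Ccyc a b c)⁻¹ = Ccyc a c b := by
  refine inv_eq_of_mul_eq_one_right ?_
  ext x
  rw [Equiv.Perm.mul_apply, Ccyc_apply a c b hac hab (Ne.symm hbc),
    Ccyc_apply a b c hab hac hbc]
  rw [Equiv.Perm.one_apply]
  split_ifs <;> simp_all

private lemma Ccyc_rot {a b c : γ} (hab : a ≠ b) (hac : a ≠ c) (hbc : b ≠ c) :
    Ccyc a b c = Ccyc b c a := by
  ext x
  rw [Ccyc_apply a b c hab hac hbc, Ccyc_apply b c a hbc (Ne.symm hab) (Ne.symm hac)]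
  split_ifs <;> simp_all

private lemma Ccyc_comp {d x y b : γ} (h1 : d ≠ x) (h2 : d ≠ y) (h3 : d ≠ b) (h4 : x ≠ y)
    (h5 : x ≠ b) (h6 : y ≠ b) :
    Ccyc d x y = Ccyc d b y * Ccyc d x b := by
  ext z
  rw [Equiv.Perm.mul_apply, Ccyc_apply d x y h1 h2 h4, Ccyc_apply d x b h1 h3 h5,
    Ccyc_apply d b y h3 h2 (Ne.symm h6)]
  split_ifs <;> simp_all

private lemma Ccyc_split {u v w d : γ} (h1 : u ≠ v) (h2 : u ≠ w) (h3 : v ≠ w) (h4 : d ≠ u)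
    (h5 : d ≠ v) (h6 : d ≠ w) :
    Ccyc u v w = Ccyc d u v * Ccyc d v w := by
  ext z
  rw [Equiv.Perm.mul_apply, Ccyc_apply u v w h1 h2 h3, Ccyc_apply d v w h5 h6 h3,
    Ccyc_apply d u v h4 h5 h1]
  split_ifs <;> simp_all

variable [Fintype γ]

private lemma threeCycle_eq_Ccyc {σ : Equiv.Perm γ} (hσ : σ.IsThreeCycle) :
    ∃ u v w : γ, u ≠ v ∧ u ≠ w ∧ v ≠ w ∧ σ = Ccyc u v w := by
  have hcard := hσ.card_support
  have hne : σ.support.Nonempty := Finset.card_pos.mp (by omega)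
  obtain ⟨u, hu⟩ := hne
  set v := σ u with hv
  set w := σ v with hw
  have ord : orderOf σ = 3 := hσ.orderOf
  have h3 : σ ^ 3 = 1 := by rw [← ord]; exact pow_orderOf_eq_one σ
  have huv : u ≠ v := fun h => (Equiv.Perm.mem_support.mp hu) h.symm
  have hvsup : v ∈ σ.support := Equiv.Perm.apply_mem_support.mpr hu
  have hvw : v ≠ w := fun h => (Equiv.Perm.mem_support.mp hvsup) h.symm
  have hwu : σ w = u := by
    have h4 : σ (σ (σ u)) = (σ ^ 3) u := by simp [pow_succ, Equiv.Perm.mul_apply]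
    rw [h3] at h4
    simpa [← hv, ← hw] using h4
  have huw : u ≠ w := by
    intro h
    have h5 : σ u = u := by rw [h]; exact h ▸ hwu
    exact (Equiv.Perm.mem_support.mp hu) h5
  refine ⟨u, v, w, huv, huw, hvw, ?_⟩
  have hwsup : w ∈ σ.support := Equiv.Perm.apply_mem_support.mpr hvsup
  have hsub : ({u, v, w} : Finset γ) ⊆ σ.support := by
    intro x hx
    simp only [Finset.mem_insert, Finset.mem_singleton] at hx
    rcases hx with rfl | rfl | rfl <;> assumption
  have hsup : ({u, v, w} : Finset γ) = σ.support := by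
    apply Finset.eq_of_subset_of_card_le hsub
    rw [hcard]
    have : ({u, v, w} : Finset γ).card = 3 := by
      rw [Finset.card_insert_of_notMem (by simp [huv, huw]),
        Finset.card_insert_of_notMem (by simp [hvw]), Finset.card_singleton]
    omega
  ext x
  rw [show Ccyc u v w x = (Equiv.swap u v) ((Equiv.swap v w) x) from rfl]
  by_cases hxu : x = u
  · subst hxu; rw [swap_apply_of_ne_of_ne huv huw, swap_apply_left, hv]
  by_cases hxv : x = v
  · subst hxv; rw [swap_apply_left, swap_apply_of_ne_of_ne (Ne.symm huw) (Ne.symm hvw), hw]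
  by_cases hxw : x = w
  · subst hxw; rw [swap_apply_right, swap_apply_right, hwu]
  · rw [swap_apply_of_ne_of_ne hxv hxw, swap_apply_of_ne_of_ne hxu hxv]
    have hns : x ∉ σ.support := by rw [← hsup]; simp [hxu, hxv, hxw]
    exact Equiv.Perm.notMem_support.mp hns

/-- If a subgroup of `Perm γ` contains all 3-cycles `(d a b)` with `a ∈ A`, `b ∈ B`,
where `{d}, A, B` cover `γ` and are pairwise disjoint, then it contains the
alternating group. -/
private lemma alt_le_of_cycles (d : γ) (A B : Set γ)
    (hAne : A.Nonempty) (hBne : B.Nonempty)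
    (hcover : ∀ x : γ, x = d ∨ x ∈ A ∨ x ∈ B)
    (hdA : d ∉ A) (hdB : d ∉ B) (hAB : ∀ x ∈ A, x ∉ B)
    (S : Subgroup (Equiv.Perm γ))
    (hgen : ∀ a ∈ A, ∀ b ∈ B, Ccyc d a b ∈ S) :
    alternatingGroup γ ≤ S := by
  obtain ⟨a₀, ha₀⟩ := hAne
  obtain ⟨b₀, hb₀⟩ := hBne
  have key : ∀ x y : γ, x ≠ d → y ≠ d → x ≠ y → Ccyc d x y ∈ S := by
    intro x y hxd hyd hxy
    rcases hcover x with rfl | hxA | hxB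
    · exact absurd rfl hxd
    · rcases hcover y with rfl | hyA | hyB
      · exact absurd rfl hyd
      · -- x, y ∈ A : use b₀
        have hxb : x ≠ b₀ := fun h => hAB x hxA (h ▸ hb₀)
        have hyb : y ≠ b₀ := fun h => hAB y hyA (h ▸ hb₀)
        have hdb : d ≠ b₀ := fun h => hdB (h ▸ hb₀)
        rw [Ccyc_comp (Ne.symm hxd) (Ne.symm hyd) hdb hxy hxb hyb]
        refine S.mul_mem ?_ (hgen x hxA b₀ hb₀)
        rw [← Ccyc_inv (Ne.symm hyd) hdb hyb]
        exact S.inv_mem (hgen y hyA b₀ hb₀)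
      · exact hgen x hxA y hyB
    · rcases hcover y with rfl | hyA | hyB
      · exact absurd rfl hyd
      · -- x ∈ B, y ∈ A
        rw [← Ccyc_inv (Ne.symm hyd) (Ne.symm hxd) (Ne.symm hxy)]
        exact S.inv_mem (hgen y hyA x hxB)
      · -- x, y ∈ B : use a₀
        have hxa : x ≠ a₀ := fun h => hAB a₀ ha₀ (h ▸ hxB)
        have hya : y ≠ a₀ := fun h => hAB a₀ ha₀ (h ▸ hyB)
        have hda : d ≠ a₀ := fun h => hdA (h ▸ ha₀)
        rw [Ccyc_comp (Ne.symm hxd) (Ne.symm hyd) hda hxy hxa hya]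
        refine S.mul_mem (hgen a₀ ha₀ y hyB) ?_
        rw [← Ccyc_inv hda (Ne.symm hxd) (Ne.symm hxa)]
        exact S.inv_mem (hgen a₀ ha₀ x hxB)
  rw [← Equiv.Perm.closure_three_cycles_eq_alternating]
  rw [Subgroup.closure_le]
  rintro σ hσ
  obtain ⟨u, v, w, huv, huw, hvw, rfl⟩ := threeCycle_eq_Ccyc hσ
  by_cases hud : u = d
  · subst hud; exact key v w (Ne.symm huv) (Ne.symm huw) hvw
  by_cases hvd : v = d
  · subst hvd
    rw [Ccyc_rot huv huw hvw]
    exact key w u (Ne.symm hvw) hud (Ne.symm huw)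
  by_cases hwd : w = d
  · subst hwd
    rw [Ccyc_rot huv huw hvw, Ccyc_rot hvw (Ne.symm huv) (Ne.symm huw)]
    exact key u v hud hvd huv
  · rw [Ccyc_split huv huw hvw (Ne.symm hud) (Ne.symm hvd) (Ne.symm hwd)]
    exact S.mul_mem (key u v hud hvd huv) (key v w hvd hwd hvw)

end Aux

set_option maxHeartbeats 1000000 in
theorem statement_5 {Ω : Type*} [Fintype Ω] [DecidableEq Ω]
    (G H K : Subgroup (Equiv.Perm Ω)) (hH : H ≤ G) (hK : K ≤ G) (δ : Ω)
    (MK FH MH FK : Set Ω)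
    (hMKFH : MK ⊆ FH) (hFHδ : FH ⊆ {δ}ᶜ) (hMHFK : MH ⊆ FK) (hFKδ : FK ⊆ {δ}ᶜ)
    (hMKne : MK.Nonempty) (hFHne : FH.Nonempty) (hMHne : MH.Nonempty) (hFKne : FK.Nonempty)
    -- (i) `H` fixes every point of `F_H`
    (h1 : ∀ h ∈ H, ∀ x ∈ FH, h x = x)
    -- (ii) `K` fixes every point of `F_K`
    (h2 : ∀ k ∈ K, ∀ x ∈ FK, k x = x)
    -- (iii) `H` leaves `M_H ∪ {δ}` and `F_K ∪ {δ}` invariant, and acts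
    -- transitively on `M_H ∪ {δ}`
    (h3 : ∀ h ∈ H, ⇑h '' (MH ∪ {δ}) = MH ∪ {δ})
    (h3' : ∀ h ∈ H, ⇑h '' (FK ∪ {δ}) = FK ∪ {δ})
    (h3'' : ∀ x ∈ MH ∪ {δ}, ∀ y ∈ MH ∪ {δ}, ∃ h ∈ H, h x = y)
    -- (iv) `K` leaves `M_K ∪ {δ}` and `F_H ∪ {δ}` invariant, and acts
    -- transitively on `M_K ∪ {δ}`
    (h4 : ∀ k ∈ K, ⇑k '' (MK ∪ {δ}) = MK ∪ {δ})
    (h4' : ∀ k ∈ K, ⇑k '' (FH ∪ {δ}) = FH ∪ {δ})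
    (h4'' : ∀ x ∈ MK ∪ {δ}, ∀ y ∈ MK ∪ {δ}, ∃ k ∈ K, k x = y) :
    ∃ L : Subgroup (Equiv.Perm Ω), L ≤ G ∧
      -- every element of `L` fixes each point of
      -- `(F_H ∪ F_K ∪ {δ}) \ (M_H ∪ M_K ∪ {δ})`
      (∀ l ∈ L, ∀ x ∈ (FH ∪ FK ∪ {δ}) \ (MH ∪ MK ∪ {δ}), l x = x) ∧
      -- `L` leaves `M_H ∪ M_K ∪ {δ}` invariant
      (∀ l ∈ L, ⇑l '' (MH ∪ MK ∪ {δ}) = MH ∪ MK ∪ {δ}) ∧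
      -- the permutation group induced by `L` on `M_H ∪ M_K ∪ {δ}` is the
      -- full alternating group on that set
      (∀ σ : Equiv.Perm ↥(MH ∪ MK ∪ {δ} : Set Ω),
        σ ∈ alternatingGroup ↥(MH ∪ MK ∪ {δ} : Set Ω) ↔
          ∃ l, ∃ _ : l ∈ L,
            ∃ hl : ∀ x, x ∈ (MH ∪ MK ∪ {δ} : Set Ω) ↔ l x ∈ (MH ∪ MK ∪ {δ} : Set Ω),
              σ = Equiv.Perm.subtypePerm l (fun x => (hl x).symm)) := by
  classical
  -- notation
  set M : Set Ω := MH ∪ MK ∪ {δ} with hMdef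
  have hmemM : ∀ x, x ∈ M ↔ (x ∈ MH ∨ x ∈ MK ∨ x = δ) := by
    intro x
    simp only [hMdef, Set.mem_union, Set.mem_singleton_iff, or_assoc]
  -- basic disjointness facts
  have hMH_FH : ∀ x ∈ MH, x ∉ FH := by
    intro x hx hxFH
    obtain ⟨h, hh, hhx⟩ := h3'' δ (Or.inr rfl) x (Or.inl hx)
    have hfix : h x = x := h1 h hh x hxFH
    have : δ = x := h.injective (by rw [hhx, hfix])
    exact (hFHδ hxFH) this.symm
  have hMK_FK : ∀ x ∈ MK, x ∉ FK := by
    intro x hx hxFK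
    obtain ⟨k, hk, hkx⟩ := h4'' δ (Or.inr rfl) x (Or.inl hx)
    have hfix : k x = x := h2 k hk x hxFK
    have : δ = x := k.injective (by rw [hkx, hfix])
    exact (hFKδ hxFK) this.symm
  have hMHMK : ∀ x ∈ MH, x ∉ MK := fun x hx hx' => hMH_FH x hx (hMKFH hx')
  have hδMH : δ ∉ MH := fun h => (hFKδ (hMHFK h)) rfl
  have hδMK : δ ∉ MK := fun h => (hFHδ (hMKFH h)) rfl
  -- movement lemmas
  have hHfixMK : ∀ h ∈ H, ∀ x ∈ MK, h x = x := fun h hh x hx => h1 h hh x (hMKFH hx)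
  have hKfixMH : ∀ k ∈ K, ∀ x ∈ MH, k x = x := fun k hk x hx => h2 k hk x (hMHFK hx)
  have hHmapMH : ∀ h ∈ H, ∀ x ∈ MH ∪ {δ}, h x ∈ MH ∪ {δ} := fun h hh x hx =>
    (h3 h hh) ▸ Set.mem_image_of_mem _ hx
  have hHmapFK : ∀ h ∈ H, ∀ x ∈ FK ∪ {δ}, h x ∈ FK ∪ {δ} := fun h hh x hx =>
    (h3' h hh) ▸ Set.mem_image_of_mem _ hx
  have hKmapMK : ∀ k ∈ K, ∀ x ∈ MK ∪ {δ}, k x ∈ MK ∪ {δ} := fun k hk x hx =>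
    (h4 k hk) ▸ Set.mem_image_of_mem _ hx
  have hKmapFH : ∀ k ∈ K, ∀ x ∈ FH ∪ {δ}, k x ∈ FH ∪ {δ} := fun k hk x hx =>
    (h4' k hk) ▸ Set.mem_image_of_mem _ hx
  -- preservation of M
  have hpresH : ∀ h ∈ H, ∀ x, x ∈ M ↔ h x ∈ M := by
    have fwd : ∀ h ∈ H, ∀ x, x ∈ M → h x ∈ M := by
      intro h hh x hx
      rw [hmemM] at hx ⊢
      rcases hx with hx | hx | rfl
      · rcases hHmapMH h hh x (Or.inl hx) with h' | h'
        · exact Or.inl h'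
        · exact Or.inr (Or.inr h')
      · rw [hHfixMK h hh x hx]; exact Or.inr (Or.inl hx)
      · rcases hHmapMH h hh x (Or.inr rfl) with h' | h'
        · exact Or.inl h'
        · exact Or.inr (Or.inr h')
    intro h hh x
    refine ⟨fwd h hh x, fun hx => ?_⟩
    have := fwd h⁻¹ (inv_mem hh) (h x) hx
    simpa using this
  have hpresK : ∀ k ∈ K, ∀ x, x ∈ M ↔ k x ∈ M := by
    have fwd : ∀ k ∈ K, ∀ x, x ∈ M → k x ∈ M := by
      intro k hk x hx
      rw [hmemM] at hx ⊢
      rcases hx with hx | hx | rfl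
      · rw [hKfixMH k hk x hx]; exact Or.inl hx
      · rcases hKmapMK k hk x (Or.inl hx) with h' | h'
        · exact Or.inr (Or.inl h')
        · exact Or.inr (Or.inr h')
      · rcases hKmapMK k hk x (Or.inr rfl) with h' | h'
        · exact Or.inr (Or.inl h')
        · exact Or.inr (Or.inr h')
    intro k hk x
    refine ⟨fwd k hk x, fun hx => ?_⟩
    have := fwd k⁻¹ (inv_mem hk) (k x) hx
    simpa using this
  -- the generating set
  set Sgen : Set (Equiv.Perm Ω) := {z | ∃ h ∈ H, ∃ k ∈ K, z = h * k * h⁻¹ * k⁻¹} with hSgen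
  set L : Subgroup (Equiv.Perm Ω) := Subgroup.closure Sgen with hLdef
  have hLG : L ≤ G := by
    rw [hLdef, Subgroup.closure_le]
    rintro z ⟨h, hh, k, hk, rfl⟩
    exact mul_mem (mul_mem (mul_mem (hH hh) (hK hk)) (inv_mem (hH hh))) (inv_mem (hK hk))
  -- generators preserve M
  have hgen_pres : ∀ z ∈ Sgen, ∀ x, x ∈ M ↔ z x ∈ M := by
    rintro z ⟨h, hh, k, hk, rfl⟩ x
    simp only [Equiv.Perm.mul_apply]
    rw [← hpresH h hh, ← hpresK k hk, ← hpresH h⁻¹ (inv_mem hh), ← hpresK k⁻¹ (inv_mem hk)]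
  -- generators fix the difference set pointwise
  have hgen_fix : ∀ z ∈ Sgen, ∀ x ∈ (FH ∪ FK ∪ {δ}) \ M, z x = x := by
    rintro z ⟨h, hh, k, hk, rfl⟩ x ⟨hx1, hx2⟩
    rw [hmemM] at hx2
    push_neg at hx2
    obtain ⟨hxMH, hxMK, hxδ⟩ := hx2
    simp only [Equiv.Perm.mul_apply]
    rcases hx1 with (hxFH | hxFK) | hxδ'
    · -- x ∈ FH
      have e1 : k⁻¹ x ∈ FH ∪ {δ} := hKmapFH k⁻¹ (inv_mem hk) x (Or.inl hxFH)
      have e2 : k⁻¹ x ≠ δ := by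
        intro e
        have : x = k δ := by rw [← e]; simp
        rcases hKmapMK k hk δ (Or.inr rfl) with h' | h'
        · exact hxMK (this ▸ h')
        · exact hxδ (this.trans h')
      have e3 : k⁻¹ x ∈ FH := e1.resolve_right e2
      rw [h1 h⁻¹ (inv_mem hh) _ e3, Equiv.Perm.apply_inv_self, h1 h hh x hxFH]
    · -- x ∈ FK
      rw [h2 k⁻¹ (inv_mem hk) x hxFK]
      have e1 : h⁻¹ x ∈ FK ∪ {δ} := hHmapFK h⁻¹ (inv_mem hh) x (Or.inl hxFK)
      have e2 : h⁻¹ x ≠ δ := by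
        intro e
        have : x = h δ := by rw [← e]; simp
        rcases hHmapMH h hh δ (Or.inr rfl) with h' | h'
        · exact hxMH (this ▸ h')
        · exact hxδ (this.trans h')
      have e3 : h⁻¹ x ∈ FK := e1.resolve_right e2
      rw [h2 k hk _ e3, Equiv.Perm.apply_inv_self]
    · exact absurd hxδ' hxδ
  -- all elements of L fix the difference set and preserve M
  have hLprop : ∀ l ∈ L, (∀ x ∈ (FH ∪ FK ∪ {δ}) \ M, l x = x) ∧ (∀ x, x ∈ M ↔ l x ∈ M) := by
    intro l hl
    refine Subgroup.closure_induction
      (p := fun g _ => (∀ x ∈ (FH ∪ FK ∪ {δ}) \ M, g x = x) ∧ (∀ x, x ∈ M ↔ g x ∈ M))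
      (fun z hz => ⟨hgen_fix z hz, hgen_pres z hz⟩) ⟨fun x _ => rfl, fun x => Iff.rfl⟩
      ?_ ?_ hl
    · rintro a b _ _ ⟨ha1, ha2⟩ ⟨hb1, hb2⟩
      refine ⟨fun x hx => ?_, fun x => (hb2 x).trans (ha2 (b x))⟩
      rw [Equiv.Perm.mul_apply, hb1 x hx, ha1 x hx]
    · rintro a _ ⟨ha1, ha2⟩
      constructor
      · intro x hx
        have hfix := ha1 x hx
        apply a.injective
        rw [Equiv.Perm.apply_inv_self, hfix]
      · intro x
        have := ha2 (a⁻¹ x)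
        rw [Equiv.Perm.apply_inv_self] at this
        exact this.symm
  -- all elements of L induce even permutations of M
  have hLeven : ∀ l ∈ L, (∀ x, x ∈ M ↔ l x ∈ M) ∧ (∀ (hl : ∀ x, x ∈ M ↔ l x ∈ M),
      Equiv.Perm.sign (l.subtypePerm (fun x => (hl x).symm)) = 1) := by
    intro l hl
    refine Subgroup.closure_induction
      (p := fun g _ => (∀ x, x ∈ M ↔ g x ∈ M) ∧ (∀ (hg : ∀ x, x ∈ M ↔ g x ∈ M),
        Equiv.Perm.sign (g.subtypePerm (fun x => (hg x).symm)) = 1))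
      ?_ ?_ ?_ ?_ hl
    · rintro z ⟨h, hh, k, hk, rfl⟩
      refine ⟨hgen_pres _ ⟨h, hh, k, hk, rfl⟩, fun hz => ?_⟩
      have ph := hpresH h hh
      have pk := hpresK k hk
      have key : (h * k * h⁻¹ * k⁻¹).subtypePerm (fun x => (hz x).symm) =
          h.subtypePerm (fun x => (ph x).symm) * k.subtypePerm (fun x => (pk x).symm) * (h.subtypePerm (fun x => (ph x).symm))⁻¹ * (k.subtypePerm (fun x => (pk x).symm))⁻¹ :=
        rfl
      rw [key]
      simp only [map_mul, map_inv]
      generalize Equiv.Perm.sign (h.subtypePerm (fun x => (ph x).symm)) = sa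
      generalize Equiv.Perm.sign (k.subtypePerm (fun x => (pk x).symm)) = sb
      rw [mul_comm sa sb]
      group
    · refine ⟨fun x => Iff.rfl, fun hg => ?_⟩
      rw [show (1 : Equiv.Perm Ω).subtypePerm (fun x => (hg x).symm) = 1 from rfl]
      simp
    · rintro a b _ _ ⟨pa, sa⟩ ⟨pb, sb⟩
      refine ⟨fun x => (pb x).trans (pa (b x)), fun hg => ?_⟩
      have key : (a * b).subtypePerm (fun x => (hg x).symm) = a.subtypePerm (fun x => (pa x).symm) * b.subtypePerm (fun x => (pb x).symm) := rfl
      rw [key, map_mul, sa pa, sb pb, one_mul]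
    · rintro a _ ⟨pa, sa⟩
      have pa' : ∀ x, x ∈ M ↔ a⁻¹ x ∈ M := fun x => by
        have := pa (a⁻¹ x)
        rw [Equiv.Perm.apply_inv_self] at this
        exact this.symm
      refine ⟨pa', fun hg => ?_⟩
      have key : (a⁻¹).subtypePerm (fun x => (hg x).symm) = (a.subtypePerm (fun x => (pa x).symm))⁻¹ := rfl
      rw [key, map_inv, sa pa]
      rfl
  -- the subtype point δ
  have hδM : δ ∈ M := by rw [hmemM]; exact Or.inr (Or.inr rfl)
  -- the induced subgroup on M
  set T : Subgroup (Equiv.Perm ↥M) :=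
    { carrier := {σ | ∃ l, l ∈ L ∧ ∃ hl : ∀ x, x ∈ M ↔ l x ∈ M, σ = l.subtypePerm (fun x => (hl x).symm)}
      one_mem' := ⟨1, one_mem L, fun _ => Iff.rfl, rfl⟩
      mul_mem' := by
        rintro σ τ ⟨l, hlL, hl, rfl⟩ ⟨l', hlL', hl', rfl⟩
        exact ⟨l * l', mul_mem hlL hlL', fun x => (hl' x).trans (hl (l' x)), rfl⟩
      inv_mem' := by
        rintro σ ⟨l, hlL, hl, rfl⟩
        refine ⟨l⁻¹, inv_mem hlL, fun x => ?_, rfl⟩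
        have := hl (l⁻¹ x)
        rw [Equiv.Perm.apply_inv_self] at this
        exact this.symm } with hTdef
  -- the key generators of T : for a ∈ MH, b ∈ MK the 3-cycle (δ a b) is induced
  -- by a commutator
  have hTgen : ∀ (a : Ω) (haMH : a ∈ MH) (b : Ω) (hbMK : b ∈ MK),
      Ccyc (⟨δ, hδM⟩ : ↥M) ⟨a, (hmemM a).mpr (Or.inl haMH)⟩
        ⟨b, (hmemM b).mpr (Or.inr (Or.inl hbMK))⟩ ∈ T := by
    intro a haMH b hbMK
    obtain ⟨h, hh, hhδ⟩ := h3'' δ (Or.inr rfl) a (Or.inl haMH)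
    obtain ⟨k, hk, hkδ⟩ := h4'' δ (Or.inr rfl) b (Or.inl hbMK)
    have haδ : a ≠ δ := fun e => hδMH (e ▸ haMH)
    have hbδ : b ≠ δ := fun e => hδMK (e ▸ hbMK)
    have hab : a ≠ b := fun e => hMHMK a haMH (e ▸ hbMK)
    set l : Equiv.Perm Ω := h * k * h⁻¹ * k⁻¹ with hldef
    have hlL : l ∈ L := Subgroup.subset_closure ⟨h, hh, k, hk, rfl⟩
    have hlpres : ∀ x, x ∈ M ↔ l x ∈ M := hgen_pres l ⟨h, hh, k, hk, rfl⟩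
    -- pointwise values of l on M
    have happ : ∀ x, l x = h (k (h⁻¹ (k⁻¹ x))) := fun x => rfl
    have hinvδ : h⁻¹ a = δ := by rw [← hhδ]; simp
    have la : l a = b := by
      rw [happ, h2 k⁻¹ (inv_mem hk) a (hMHFK haMH), hinvδ, hkδ,
        h1 h hh b (hMKFH hbMK)]
    have lb : l b = δ := by
      have e1 : k⁻¹ b = δ := by rw [← hkδ]; simp
      have e2 : h⁻¹ δ ∈ MH ∪ {δ} := hHmapMH h⁻¹ (inv_mem hh) δ (Or.inr rfl)
      have e3 : h⁻¹ δ ≠ δ := by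
        intro e
        have e' := congrArg h e
        rw [Equiv.Perm.apply_inv_self] at e'
        exact haδ (e'.trans hhδ).symm
      have e4 : h⁻¹ δ ∈ MH := e2.resolve_right e3
      rw [happ, e1, hKfixMH k hk _ e4, Equiv.Perm.apply_inv_self]
    have lδ : l δ = a := by
      have e1 : k⁻¹ δ ∈ MK ∪ {δ} := hKmapMK k⁻¹ (inv_mem hk) δ (Or.inr rfl)
      have e2 : k⁻¹ δ ≠ δ := by
        intro e
        have e' := congrArg k e
        rw [Equiv.Perm.apply_inv_self] at e'
        exact hbδ (e'.trans hkδ).symm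
      have e3 : k⁻¹ δ ∈ MK := e1.resolve_right e2
      rw [happ, hHfixMK h⁻¹ (inv_mem hh) _ e3, Equiv.Perm.apply_inv_self, hhδ]
    have lfix : ∀ x ∈ M, x ≠ a → x ≠ b → x ≠ δ → l x = x := by
      intro x hxM hxa hxb hxδ
      rw [hmemM] at hxM
      rcases hxM with hx | hx | hx
      · -- x ∈ MH, x ≠ a
        have e1 : h⁻¹ x ∈ MH ∪ {δ} := hHmapMH h⁻¹ (inv_mem hh) x (Or.inl hx)
        have e2 : h⁻¹ x ≠ δ := by
          intro e
          apply hxa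
          have : h (h⁻¹ x) = h δ := by rw [e]
          rw [Equiv.Perm.apply_inv_self, hhδ] at this
          exact this
        have e3 : h⁻¹ x ∈ MH := e1.resolve_right e2
        rw [happ, h2 k⁻¹ (inv_mem hk) x (hMHFK hx), hKfixMH k hk _ e3,
          Equiv.Perm.apply_inv_self]
      · -- x ∈ MK, x ≠ b
        have e1 : k⁻¹ x ∈ MK ∪ {δ} := hKmapMK k⁻¹ (inv_mem hk) x (Or.inl hx)
        have e2 : k⁻¹ x ≠ δ := by
          intro e
          apply hxb
          have : k (k⁻¹ x) = k δ := by rw [e]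
          rw [Equiv.Perm.apply_inv_self, hkδ] at this
          exact this
        have e3 : k⁻¹ x ∈ MK := e1.resolve_right e2
        rw [happ, hHfixMK h⁻¹ (inv_mem hh) _ e3, Equiv.Perm.apply_inv_self,
          h1 h hh x (hMKFH hx)]
      · exact absurd hx hxδ
    refine ⟨l, hlL, hlpres, ?_⟩
    ext m
    have hd1 : (⟨δ, hδM⟩ : ↥M) ≠ ⟨a, (hmemM a).mpr (Or.inl haMH)⟩ :=
      fun e => haδ (congrArg Subtype.val e).symm
    have hd2 : (⟨δ, hδM⟩ : ↥M) ≠ ⟨b, (hmemM b).mpr (Or.inr (Or.inl hbMK))⟩ :=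
      fun e => hbδ (congrArg Subtype.val e).symm
    have hd3 : (⟨a, (hmemM a).mpr (Or.inl haMH)⟩ : ↥M) ≠
        ⟨b, (hmemM b).mpr (Or.inr (Or.inl hbMK))⟩ :=
      fun e => hab (congrArg Subtype.val e)
    have lhs : ((Ccyc (⟨δ, hδM⟩ : ↥M) ⟨a, (hmemM a).mpr (Or.inl haMH)⟩
        ⟨b, (hmemM b).mpr (Or.inr (Or.inl hbMK))⟩) m : Ω) =
        if (m : Ω) = δ then a else if (m : Ω) = a then b else if (m : Ω) = b then δ
          else (m : Ω) := by
      rw [Ccyc_apply _ _ _ hd1 hd2 hd3]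
      by_cases e1 : (m : Ω) = δ
      · rw [if_pos (Subtype.ext e1), if_pos e1]
      · have e1' : m ≠ (⟨δ, hδM⟩ : ↥M) := fun e => e1 (congrArg Subtype.val e)
        rw [if_neg e1', if_neg e1]
        by_cases e2 : (m : Ω) = a
        · rw [if_pos (Subtype.ext e2), if_pos e2]
        · have e2' : m ≠ (⟨a, (hmemM a).mpr (Or.inl haMH)⟩ : ↥M) :=
            fun e => e2 (congrArg Subtype.val e)
          rw [if_neg e2', if_neg e2]
          by_cases e3 : (m : Ω) = b
          · rw [if_pos (Subtype.ext e3), if_pos e3]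
          · have e3' : m ≠ (⟨b, (hmemM b).mpr (Or.inr (Or.inl hbMK))⟩ : ↥M) :=
              fun e => e3 (congrArg Subtype.val e)
            rw [if_neg e3', if_neg e3]
    rw [lhs]
    rw [show ((l.subtypePerm (fun x => (hlpres x).symm)) m : Ω) = l (m : Ω) from rfl]
    by_cases e1 : (m : Ω) = δ
    · rw [if_pos e1, e1, lδ]
    by_cases e2 : (m : Ω) = a
    · rw [if_neg e1, if_pos e2, e2, la]
    by_cases e3 : (m : Ω) = b
    · rw [if_neg e1, if_neg e2, if_pos e3, e3, lb]
    · rw [if_neg e1, if_neg e2, if_neg e3, lfix (m : Ω) m.2 e2 e3 e1]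
  -- T contains the alternating group
  have hAltT : alternatingGroup ↥M ≤ T := by
    obtain ⟨a₀, ha₀⟩ := hMHne
    obtain ⟨b₀, hb₀⟩ := hMKne
    refine alt_le_of_cycles (⟨δ, hδM⟩ : ↥M) {m : ↥M | (m : Ω) ∈ MH} {m : ↥M | (m : Ω) ∈ MK}
      ⟨⟨a₀, by rw [hmemM]; exact Or.inl ha₀⟩, ha₀⟩
      ⟨⟨b₀, by rw [hmemM]; exact Or.inr (Or.inl hb₀)⟩, hb₀⟩ ?_ ?_ ?_ ?_ T ?_
    · intro m
      have := m.2
      rw [hmemM] at this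
      rcases this with h' | h' | h'
      · exact Or.inr (Or.inl h')
      · exact Or.inr (Or.inr h')
      · exact Or.inl (Subtype.ext h')
    · exact hδMH
    · exact hδMK
    · exact fun m hm => hMHMK _ hm
    · rintro ⟨a, haM⟩ haMH ⟨b, hbM⟩ hbMK
      exact hTgen a haMH b hbMK
  -- conclude
  refine ⟨L, hLG, fun l hl => (hLprop l hl).1, ?_, ?_⟩
  · intro l hl
    have hpres := (hLprop l hl).2
    ext y
    constructor
    · rintro ⟨x, hx, rfl⟩
      exact (hpres x).mp hx
    · intro hy
      exact ⟨l⁻¹ y, (hpres (l⁻¹ y)).mpr (by rwa [Equiv.Perm.apply_inv_self]),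
        Equiv.Perm.apply_inv_self l y⟩
  · intro σ
    constructor
    · intro hσ
      obtain ⟨l, hlL, hlpres, rfl⟩ := hAltT hσ
      exact ⟨l, hlL, hlpres, rfl⟩
    · rintro ⟨l, hlL, hlpres, rfl⟩
      exact Equiv.Perm.mem_alternatingGroup.mpr ((hLeven l hlL).2 hlpres)
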